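/- Let γ > 0 and let (α_n) be a sequence of positive reals with liminf_{n→∞} α_n > 1, and set h_n := α_n·n. Then [x^n]((1−x)^{−γ}·e^{h_n x}) ∼ (1/(1−α_n^{−1}))^{γ} · h_n^n/n! as n → ∞. -/

import Mathlib

set_option maxHeartbeats 1000000

open Filter Topology Finset

namespace Stmt10Aux

noncomputable def c (γ : ℝ) (j : ℕ) : ℝ :=
  Real.Gamma ((j : ℝ) + γ) / (Real.Gamma γ * (Nat.factorial j : ℝ))

lemma c_zero (γ : ℝ) : c γ 0 = Real.Gamma γ / Real.Gamma γ := by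
  simp [c]

lemma c_zero' (γ : ℝ) (hγ : 0 < γ) : c γ 0 = 1 := by
  rw [c_zero, div_self (Real.Gamma_pos_of_pos hγ).ne']

lemma c_pos (γ : ℝ) (hγ : 0 < γ) (j : ℕ) : 0 < c γ j := by
  apply div_pos (Real.Gamma_pos_of_pos (by positivity))
  exact mul_pos (Real.Gamma_pos_of_pos hγ) (by exact_mod_cast j.factorial_pos)

lemma c_succ (γ : ℝ) (hγ : 0 < γ) (j : ℕ) :
    c γ (j + 1) = c γ j * ((γ + j) / (j + 1)) := by
  have h1 : ((j : ℝ) + 1) + γ = ((j : ℝ) + γ) + 1 := by ring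
  have h2 : Real.Gamma (((j : ℝ) + γ) + 1) = ((j : ℝ) + γ) * Real.Gamma ((j : ℝ) + γ) :=
    Real.Gamma_add_one (by positivity)
  have hfac : (Nat.factorial (j + 1) : ℝ) = (j + 1) * Nat.factorial j := by
    push_cast [Nat.factorial_succ]; ring
  have hΓ : Real.Gamma γ ≠ 0 := (Real.Gamma_pos_of_pos hγ).ne'
  have hf : (Nat.factorial j : ℝ) ≠ 0 := by exact_mod_cast j.factorial_pos.ne'
  rw [c, c]
  push_cast
  rw [h1, h2, hfac]
  field_simp
  ring

lemma frac_tendsto (b : ℝ) : Tendsto (fun j : ℕ => ((j : ℝ) + b) / (j + 1)) atTop (𝓝 1) := by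
  have h0 : Tendsto (fun j : ℕ => (b - 1) * (1 / ((j : ℝ) + 1))) atTop (𝓝 ((b-1) * 0)) :=
    tendsto_const_nhds.mul tendsto_one_div_add_atTop_nhds_zero_nat
  have h := h0.const_add 1
  rw [mul_zero, add_zero] at h
  refine h.congr fun j => ?_
  have : (j : ℝ) + 1 ≠ 0 := by positivity
  field_simp
  ring

lemma ratio_tendsto (γ r : ℝ) : Tendsto (fun j : ℕ =>
    ((γ + j) / (j + 1) * (((j : ℝ) + 2) / (j + 1)) ^ 2) * r) atTop (𝓝 r) := by
  have h1 := frac_tendsto γ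
  have h2 := frac_tendsto 2
  have h1' : Tendsto (fun j : ℕ => (γ + (j:ℝ)) / (j + 1)) atTop (𝓝 1) := by
    refine h1.congr fun j => by rw [add_comm]
  have := (h1'.mul (h2.pow 2)).mul_const r
  simpa using this

lemma summable_master (γ : ℝ) (hγ : 0 < γ) {r : ℝ} (hr0 : 0 < r) (hr1 : r < 1) :
    Summable (fun j : ℕ => c γ j * ((j : ℝ) + 1) ^ 2 * r ^ j) := by
  set g : ℕ → ℝ := fun j => c γ j * ((j : ℝ) + 1) ^ 2 * r ^ j with hg
  have gpos : ∀ j, 0 < g j := fun j => by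
    have := c_pos γ hγ j; positivity
  apply summable_of_ratio_test_tendsto_lt_one hr1
    (Eventually.of_forall fun j => (gpos j).ne')
  have key : ∀ j : ℕ, ‖g (j+1)‖ / ‖g j‖ =
      ((γ + j) / (j + 1) * (((j : ℝ) + 2) / (j + 1)) ^ 2) * r := by
    intro j
    rw [Real.norm_of_nonneg (gpos (j+1)).le, Real.norm_of_nonneg (gpos j).le, hg]
    simp only [c_succ γ hγ j]
    have hc := (c_pos γ hγ j).ne'
    have hj1 : ((j : ℝ) + 1) ≠ 0 := by positivity
    have hrj : r ^ j ≠ 0 := by positivity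
    push_cast
    field_simp
    ring
  exact (ratio_tendsto γ r).congr fun j => (key j).symm

noncomputable def f (γ x : ℝ) : ℝ := ∑' j : ℕ, c γ j * x ^ j

lemma summable_A (γ : ℝ) (hγ : 0 < γ) {r x : ℝ} (hr0 : 0 < r) (hr1 : r < 1)
    (hx : |x| ≤ r) : Summable (fun j : ℕ => c γ j * x ^ j) := by
  refine (summable_master γ hγ hr0 hr1).of_norm_bounded fun j => ?_
  have hc := c_pos γ hγ j
  have h1 : ‖c γ j * x ^ j‖ = c γ j * |x| ^ j := by
    rw [norm_mul, Real.norm_of_nonneg hc.le, norm_pow, Real.norm_eq_abs]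
  rw [h1]
  have h2 : |x| ^ j ≤ r ^ j := pow_le_pow_left₀ (abs_nonneg x) hx j
  have h3 : (1:ℝ) ≤ ((j:ℝ)+1)^2 := by nlinarith [Nat.cast_nonneg (α := ℝ) j]
  calc c γ j * |x| ^ j ≤ c γ j * r ^ j := mul_le_mul_of_nonneg_left h2 hc.le
    _ = c γ j * 1 * r ^ j := by ring
    _ ≤ c γ j * ((j:ℝ)+1)^2 * r ^ j := by
        apply mul_le_mul_of_nonneg_right (mul_le_mul_of_nonneg_left h3 hc.le)
          (pow_nonneg hr0.le j)

lemma summable_C (γ : ℝ) (hγ : 0 < γ) {r x : ℝ} (hr0 : 0 < r) (hr1 : r < 1)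
    (hx : |x| ≤ r) : Summable (fun j : ℕ => c γ j * (j : ℝ) * x ^ j) := by
  refine (summable_master γ hγ hr0 hr1).of_norm_bounded fun j => ?_
  have hc := c_pos γ hγ j
  have h1 : ‖c γ j * (j:ℝ) * x ^ j‖ = c γ j * (j:ℝ) * |x| ^ j := by
    simp [abs_mul, abs_of_nonneg hc.le, abs_pow, Real.norm_eq_abs, Nat.abs_cast]
  rw [h1]
  have h2 : |x| ^ j ≤ r ^ j := pow_le_pow_left₀ (abs_nonneg x) hx j
  have h3 : ((j:ℝ)) ≤ ((j:ℝ)+1)^2 := by nlinarith [Nat.cast_nonneg (α := ℝ) j]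
  have h4 : (0:ℝ) ≤ (j:ℝ) := Nat.cast_nonneg j
  calc c γ j * (j:ℝ) * |x| ^ j ≤ c γ j * (j:ℝ) * r ^ j :=
        mul_le_mul_of_nonneg_left h2 (by positivity)
    _ ≤ c γ j * ((j:ℝ)+1)^2 * r ^ j := by
        apply mul_le_mul_of_nonneg_right (mul_le_mul_of_nonneg_left h3 hc.le)
          (pow_nonneg hr0.le j)

noncomputable def u (γ r : ℝ) (j : ℕ) : ℝ := c γ j * ((j : ℝ) + 1) ^ 2 * r ^ (j - 1)

lemma summable_u (γ : ℝ) (hγ : 0 < γ) {r : ℝ} (hr0 : 0 < r) (hr1 : r < 1) :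
    Summable (u γ r) := by
  refine ((summable_master γ hγ hr0 hr1).mul_left r⁻¹).of_nonneg_of_le
    (fun j => by have := c_pos γ hγ j; unfold u; positivity) fun j => ?_
  unfold u
  have hc := (c_pos γ hγ j).le
  have key : r ^ (j - 1) ≤ r⁻¹ * r ^ j := by
    cases j with
    | zero => simpa using le_of_lt ((one_lt_inv_iff₀).2 ⟨hr0, hr1⟩)
    | succ m =>
        have : r⁻¹ * r ^ (m+1) = r ^ m := by
          rw [pow_succ, ← mul_assoc]; ring_nf
          rw [mul_comm, ← mul_assoc, inv_mul_cancel₀ hr0.ne', one_mul]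
        simp [this]
  calc c γ j * ((j:ℝ)+1)^2 * r ^ (j-1) ≤ c γ j * ((j:ℝ)+1)^2 * (r⁻¹ * r ^ j) := by
        apply mul_le_mul_of_nonneg_left key (by positivity)
    _ = r⁻¹ * (c γ j * ((j:ℝ)+1)^2 * r ^ j) := by ring

lemma deriv_bound (γ : ℝ) (hγ : 0 < γ) {r x : ℝ} (hx : |x| ≤ r) (j : ℕ) :
    ‖c γ j * ((j : ℝ) * x ^ (j - 1))‖ ≤ u γ r j := by
  have hc := c_pos γ hγ j
  have hr0 : 0 ≤ r := le_trans (abs_nonneg x) hx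
  have h1 : ‖c γ j * ((j:ℝ) * x ^ (j-1))‖ = c γ j * ((j:ℝ) * |x| ^ (j-1)) := by
    simp [Real.norm_eq_abs, abs_mul, abs_of_nonneg hc.le, abs_pow, Nat.abs_cast]
  rw [h1]
  unfold u
  have h2 : |x| ^ (j-1) ≤ r ^ (j-1) := pow_le_pow_left₀ (abs_nonneg x) hx _
  have h3 : ((j:ℝ)) ≤ ((j:ℝ)+1)^2 := by nlinarith [Nat.cast_nonneg (α := ℝ) j]
  have h4 : (0:ℝ) ≤ (j:ℝ) := Nat.cast_nonneg j
  calc c γ j * ((j:ℝ) * |x| ^ (j-1)) = c γ j * (j:ℝ) * |x| ^ (j-1) := by ring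
    _ ≤ c γ j * (j:ℝ) * r ^ (j-1) := mul_le_mul_of_nonneg_left h2 (by positivity)
    _ ≤ c γ j * ((j:ℝ)+1)^2 * r ^ (j-1) := by
        apply mul_le_mul_of_nonneg_right (mul_le_mul_of_nonneg_left h3 hc.le)
          (pow_nonneg hr0 (j-1))

lemma hasDerivAt_f (γ : ℝ) (hγ : 0 < γ) {r x : ℝ} (hr0 : 0 < r) (hr1 : r < 1)
    (hx : x ∈ Set.Ioo (-r) r) :
    HasDerivAt (f γ) (∑' j : ℕ, c γ j * ((j : ℝ) * x ^ (j - 1))) x := by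
  have h0 : (0:ℝ) ∈ Set.Ioo (-r) r := by constructor <;> simp [hr0]
  refine hasDerivAt_tsum_of_isPreconnected (summable_u γ hγ hr0 hr1) isOpen_Ioo
    (convex_Ioo _ _).isPreconnected
    (fun j y _ => (hasDerivAt_pow j y).const_mul (c γ j)) ?_ h0 ?_ hx
  · intro j y hy
    exact deriv_bound γ hγ (le_of_lt (abs_lt.2 ⟨hy.1, hy.2⟩)) j
  · apply summable_of_ne_finset_zero (s := {0})
    intro j hj
    simp only [Finset.mem_singleton] at hj
    rw [zero_pow hj, mul_zero]

lemma summable_E (γ : ℝ) (hγ : 0 < γ) {r x : ℝ} (hr0 : 0 < r) (hr1 : r < 1)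
    (hx : |x| ≤ r) : Summable (fun j : ℕ => c γ j * ((j : ℝ) * x ^ (j - 1))) :=
  (summable_u γ hγ hr0 hr1).of_norm_bounded (deriv_bound γ hγ hx)

lemma func_eq (γ : ℝ) (hγ : 0 < γ) {r x : ℝ} (hr0 : 0 < r) (hr1 : r < 1)
    (hx : |x| ≤ r) :
    (1 - x) * (∑' j : ℕ, c γ j * ((j : ℝ) * x ^ (j - 1))) = γ * f γ x := by
  have hA := summable_A γ hγ hr0 hr1 hx
  have hC := summable_C γ hγ hr0 hr1 hx
  have hE := summable_E γ hγ hr0 hr1 hx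
  set D := ∑' j : ℕ, c γ j * ((j : ℝ) * x ^ (j - 1)) with hD
  -- D = γ f + S₁
  have step1 : D = γ * f γ x + ∑' j : ℕ, c γ j * (j : ℝ) * x ^ j := by
    rw [hD, Summable.tsum_eq_zero_add hE]
    have h0 : c γ 0 * ((0:ℕ) * x ^ ((0:ℕ) - 1)) = 0 := by simp
    rw [show ((0:ℕ):ℝ) = (0:ℝ) by norm_num] at h0
    have hterm : ∀ j : ℕ, c γ (j+1) * (((j:ℕ)+1 : ℝ) * x ^ ((j+1) - 1)) =
        γ * (c γ j * x ^ j) + c γ j * (j:ℝ) * x ^ j := by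
      intro j
      rw [c_succ γ hγ j]
      have hj1 : ((j:ℝ) + 1) ≠ 0 := by positivity
      have hs : (j + 1) - 1 = j := by omega
      rw [hs]
      field_simp
    have : ∑' j : ℕ, c γ (j+1) * (((j:ℕ)+1 : ℝ) * x ^ ((j+1) - 1)) =
        γ * f γ x + ∑' j : ℕ, c γ j * (j : ℝ) * x ^ j := by
      rw [tsum_congr hterm, Summable.tsum_add (hA.mul_left γ) hC, f, ← tsum_mul_left]
    simp only [Nat.cast_add, Nat.cast_one] at this ⊢
    rw [this]
    simp
  -- x * D = S₁
  have step2 : x * D = ∑' j : ℕ, c γ j * (j : ℝ) * x ^ j := by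
    rw [hD, ← tsum_mul_left]
    apply tsum_congr
    intro j
    cases j with
    | zero => simp
    | succ m =>
      have : (m + 1) - 1 = m := by omega
      rw [this, pow_succ]
      push_cast
      ring
  have : (1 - x) * D = D - x * D := by ring
  rw [this, step2, step1]
  ring

lemma f_zero (γ : ℝ) (hγ : 0 < γ) : f γ 0 = 1 := by
  rw [f, tsum_eq_single 0 (fun j hj => by rw [zero_pow hj, mul_zero])]
  simp [c_zero' γ hγ]

lemma f_pos_ge_one (γ : ℝ) (hγ : 0 < γ) {r q : ℝ} (hr0 : 0 < r) (hr1 : r < 1)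
    (hq0 : 0 ≤ q) (hq : q ≤ r) : 1 ≤ f γ q := by
  have hA := summable_A γ hγ hr0 hr1 (by rw [abs_of_nonneg hq0]; exact hq)
  have := Summable.sum_le_tsum {0} (fun j (hj : j ∉ ({0} : Finset ℕ)) => by
    have h1 := (c_pos γ hγ j).le
    positivity) hA
  simp only [Finset.sum_singleton, pow_zero, mul_one, c_zero' γ hγ] at this
  exact this

lemma key_identity (γ : ℝ) (hγ : 0 < γ) {q : ℝ} (hq0 : 0 ≤ q) (hq1 : q < 1) :
    f γ q * (1 - q) ^ γ = 1 := by
  set r : ℝ := (q + 1) / 2 with hr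
  have hr0 : 0 < r := by rw [hr]; linarith
  have hr1 : r < 1 := by rw [hr]; linarith
  have hqr : q < r := by rw [hr]; linarith
  set F : ℝ → ℝ := fun x => f γ x * (1 - x) ^ γ with hF
  have key : ∀ x ∈ Set.Ico (0:ℝ) q, HasDerivAt F 0 x := by
    intro x hx
    have hmem : x ∈ Set.Ioo (-r) r := ⟨by linarith [hx.1], by linarith [hx.2]⟩
    have hxr : |x| ≤ r := by rw [abs_of_nonneg hx.1]; linarith [hx.2]
    have h1x : (0:ℝ) < 1 - x := by linarith [hx.2]
    have hdf := hasDerivAt_f γ hγ hr0 hr1 hmem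
    have hpow : HasDerivAt (fun y : ℝ => (1 - y) ^ γ)
        (γ * (1 - x) ^ (γ - 1) * (-1)) x := by
      have hinner : HasDerivAt (fun y : ℝ => 1 - y) (-1) x := by
        simpa using (hasDerivAt_id x).const_sub 1
      exact (Real.hasDerivAt_rpow_const (Or.inl h1x.ne')).comp x hinner
    have hprod := hdf.mul hpow
    refine hprod.congr_deriv ?_
    set D := ∑' j : ℕ, c γ j * ((j : ℝ) * x ^ (j - 1)) with hD
    have hfe := func_eq γ hγ hr0 hr1 hxr
    rw [← hD] at hfe
    have hsplit : (1 - x) ^ γ = (1 - x) * (1 - x) ^ (γ - 1) := by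
      have h := Real.rpow_add h1x 1 (γ - 1)
      rw [Real.rpow_one, show (1:ℝ) + (γ - 1) = γ by ring] at h
      exact h
    rw [hsplit]
    have : D * ((1 - x) * (1 - x) ^ (γ - 1)) = ((1-x) * D) * (1 - x) ^ (γ-1) := by ring
    rw [this, hfe]
    ring
  have hcont : ContinuousOn F (Set.Icc 0 q) := by
    intro x hx
    have hmem : x ∈ Set.Ioo (-r) r := ⟨by linarith [hx.1], by linarith [hx.2]⟩
    have h1x : (0:ℝ) < 1 - x := by linarith [hx.2, hqr, hr1]
    have hdf := hasDerivAt_f γ hγ hr0 hr1 hmem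
    have hpow : ContinuousAt (fun y : ℝ => (1 - y) ^ γ) x := by
      apply Real.continuousAt_rpow_const _ _ (Or.inl h1x.ne') |>.comp
      exact (continuous_const.sub continuous_id).continuousAt
    exact (hdf.continuousAt.mul hpow).continuousWithinAt
  have := constant_of_has_deriv_right_zero hcont
    (fun x hx => (key x hx).hasDerivWithinAt) q (Set.right_mem_Icc.2 hq0)
  rw [hF] at this
  simp only at this
  rw [this, f_zero γ hγ]
  norm_num

noncomputable def P (j n : ℕ) : ℝ := ∏ i ∈ range j, (1 - (i : ℝ) / n)

lemma weierstrass {ι : Type*} (s : Finset ι) (x : ι → ℝ) (h0 : ∀ i ∈ s, 0 ≤ x i)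
    (h1 : ∀ i ∈ s, x i ≤ 1) : 1 - ∑ i ∈ s, x i ≤ ∏ i ∈ s, (1 - x i) := by
  induction s using Finset.cons_induction with
  | empty => simp
  | cons a s ha ih =>
    rw [prod_cons, sum_cons]
    have ih' := ih (fun i hi => h0 i (Finset.mem_cons_of_mem hi))
      (fun i hi => h1 i (Finset.mem_cons_of_mem hi))
    have hxa0 := h0 a (mem_cons_self a s)
    have hxa1 := h1 a (mem_cons_self a s)
    have hsum : 0 ≤ ∑ i ∈ s, x i := sum_nonneg (fun i hi => h0 i (Finset.mem_cons_of_mem hi))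
    nlinarith [mul_le_mul_of_nonneg_left ih' (sub_nonneg.2 hxa1)]

lemma P_nonneg {j n : ℕ} (hjn : j ≤ n) : 0 ≤ P j n :=
  prod_nonneg fun i hi => by
    rcases Nat.eq_zero_or_pos n with h | h
    · exfalso; have : j = 0 := by omega
      subst this; simp at hi
    · have hi' : i < n := lt_of_lt_of_le (mem_range.1 hi) hjn
      have : (i:ℝ)/n ≤ 1 := by
        rw [div_le_one (by exact_mod_cast h)]
        exact_mod_cast hi'.le
      linarith

lemma P_le_one {j n : ℕ} (hjn : j ≤ n) : P j n ≤ 1 :=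
  prod_le_one (fun i hi => by
    rcases Nat.eq_zero_or_pos n with h | h
    · exfalso; have : j = 0 := by omega
      subst this; simp at hi
    · have hi' : i < n := lt_of_lt_of_le (mem_range.1 hi) hjn
      have : (i:ℝ)/n ≤ 1 := by
        rw [div_le_one (by exact_mod_cast h)]
        exact_mod_cast hi'.le
      linarith)
    (fun i hi => by
      have : (0:ℝ) ≤ (i:ℝ)/n := by positivity
      linarith)

lemma P_lower {j n : ℕ} (hjn : j ≤ n) (hn : 1 ≤ n) :
    1 - (j : ℝ) ^ 2 / n ≤ P j n := by
  have hn' : (0:ℝ) < n := by exact_mod_cast hn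
  have h := weierstrass (range j) (fun i => (i:ℝ)/n)
    (fun i _ => by positivity)
    (fun i hi => by
      have hi' : i < n := lt_of_lt_of_le (mem_range.1 hi) hjn
      rw [div_le_one hn']
      exact_mod_cast hi'.le)
  have hsum : ∑ i ∈ range j, (i:ℝ)/n ≤ (j:ℝ)^2 / n := by
    calc ∑ i ∈ range j, (i:ℝ)/n ≤ ∑ _i ∈ range j, (j:ℝ)/n := by
          apply sum_le_sum
          intro i hi
          gcongr
          exact_mod_cast (mem_range.1 hi).le
      _ = (j:ℝ) * ((j:ℝ)/n) := by rw [sum_const, card_range]; simp [nsmul_eq_mul]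
      _ = (j:ℝ)^2/n := by ring
  refine le_trans (by linarith) h

lemma factorial_prod {j n : ℕ} (hjn : j ≤ n) :
    (Nat.factorial n : ℝ) = (Nat.factorial (n - j) : ℝ) * ∏ i ∈ range j, ((n : ℝ) - i) := by
  have h := Nat.factorial_mul_descFactorial hjn
  have h2 : (n.descFactorial j : ℝ) = ∏ i ∈ range j, ((n:ℝ) - i) := by
    rw [Nat.descFactorial_eq_prod_range]
    push_cast
    apply prod_congr rfl
    intro i hi
    have : i ≤ n := le_trans (le_of_lt (mem_range.1 hi)) hjn
    rw [Nat.cast_sub this]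
  rw [← h2, ← h]
  push_cast
  ring

lemma P_eq {j n : ℕ} (hjn : j ≤ n) (hn : 1 ≤ n) :
    P j n = (Nat.factorial n : ℝ) / ((Nat.factorial (n - j) : ℝ) * (n : ℝ) ^ j) := by
  have hn' : (0:ℝ) < n := by exact_mod_cast hn
  rw [factorial_prod hjn, P]
  rw [prod_congr rfl (fun i (_ : i ∈ range j) => show (1 - (i:ℝ)/n) = ((n:ℝ) - i)/n by
    field_simp)]
  rw [prod_div_distrib, prod_const, card_range]
  have hfac : (Nat.factorial (n-j) : ℝ) ≠ 0 := by
    exact_mod_cast (Nat.factorial_pos (n-j)).ne'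
  field_simp

lemma term_eq (γ : ℝ) {j n : ℕ} (hjn : j ≤ n) (hn : 1 ≤ n) {α : ℝ} (hα : 0 < α) :
    c γ j * (α * n) ^ (n - j) / (Nat.factorial (n - j) : ℝ) =
      c γ j * α⁻¹ ^ j * P j n * ((α * n) ^ n / (Nat.factorial n : ℝ)) := by
  have hn' : (0:ℝ) < n := by exact_mod_cast hn
  have hh : (0:ℝ) < α * n := by positivity
  have hpow : (α * n) ^ (n - j) = (α * n) ^ n / (α * n) ^ j := by
    rw [eq_div_iff (by positivity), ← pow_add]
    congr 1
    omega
  rw [hpow, P_eq hjn hn]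
  have hfacn : (Nat.factorial n : ℝ) ≠ 0 := by exact_mod_cast (Nat.factorial_pos n).ne'
  have hfacnj : (Nat.factorial (n-j) : ℝ) ≠ 0 := by exact_mod_cast (Nat.factorial_pos (n-j)).ne'
  have hαj : α ^ j * α⁻¹ ^ j = 1 := by rw [← mul_pow, mul_inv_cancel₀ hα.ne', one_pow]
  field_simp
  linear_combination (-(c γ j * (n:ℝ) ^ j)) * hαj

lemma sumK (γ : ℝ) (hγ : 0 < γ) {r : ℝ} (hr0 : 0 < r) (hr1 : r < 1) :
    Summable (fun j : ℕ => c γ j * (j : ℝ) ^ 2 * r ^ j) := by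
  refine (summable_master γ hγ hr0 hr1).of_nonneg_of_le
    (fun j => by have := (c_pos γ hγ j).le; positivity) fun j => ?_
  have hc := (c_pos γ hγ j).le
  have h : ((j:ℝ))^2 ≤ ((j:ℝ)+1)^2 := by nlinarith [Nat.cast_nonneg (α := ℝ) j]
  have hr := pow_nonneg hr0.le j
  have h2 : (0:ℝ) ≤ ((j:ℝ))^2 := by positivity
  calc c γ j * (j:ℝ)^2 * r ^ j ≤ c γ j * ((j:ℝ)+1)^2 * r ^ j := by
        apply mul_le_mul_of_nonneg_right (mul_le_mul_of_nonneg_left h hc) hr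

end Stmt10Aux

theorem stmt_10
    (γ : ℝ) (hγ : 0 < γ) (a : ℕ → ℝ) (ha : ∀ n : ℕ, 0 < a n)
    (hliminf : ∃ ε : ℝ, 0 < ε ∧ ∀ᶠ n : ℕ in atTop, 1 + ε ≤ a n) :
    Tendsto (fun n : ℕ =>
      (∑ k ∈ Finset.range (n + 1),
        Real.Gamma (((n - k : ℕ) : ℝ) + γ) / (Real.Gamma γ * (Nat.factorial (n - k) : ℝ)) *
          (a n * (n : ℝ)) ^ k / (Nat.factorial k : ℝ)) /
      ((1 / (1 - (a n)⁻¹)) ^ γ * (a n * (n : ℝ)) ^ n / (Nat.factorial n : ℝ))) atTop (nhds 1) := by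
  classical
  obtain ⟨ε, hε, hev⟩ := hliminf
  have h1ε : (0:ℝ) < 1 + ε := by linarith
  set q₀ : ℝ := (1 + ε)⁻¹ with hq₀def
  have hq₀0 : 0 < q₀ := by positivity
  have hq₀1 : q₀ < 1 := by
    rw [hq₀def]
    rw [inv_lt_one_iff₀]
    right; linarith
  have hKsum := Stmt10Aux.sumK γ hγ hq₀0 hq₀1
  set K : ℝ := ∑' j : ℕ, Stmt10Aux.c γ j * (j:ℝ)^2 * q₀ ^ j with hKdef
  have hAq₀ : Summable (fun j : ℕ => Stmt10Aux.c γ j * q₀ ^ j) :=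
    Stmt10Aux.summable_A γ hγ hq₀0 hq₀1 (by rw [abs_of_nonneg hq₀0.le])
  set E : ℕ → ℝ := fun n =>
    K / n + ∑' i : ℕ, Stmt10Aux.c γ (i + (n+1)) * q₀ ^ (i + (n+1)) with hEdef
  have hEtend : Tendsto E atTop (𝓝 0) := by
    have h1 : Tendsto (fun n : ℕ => K / n) atTop (𝓝 0) :=
      tendsto_const_div_atTop_nhds_zero_nat K
    have h2 := (tendsto_sum_nat_add (fun j : ℕ => Stmt10Aux.c γ j * q₀ ^ j)).comp
      (tendsto_add_atTop_nat 1)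
    have h3 := h1.add h2
    rw [add_zero] at h3
    exact h3.congr fun n => rfl
  rw [← tendsto_sub_nhds_zero_iff]
  apply squeeze_zero_norm' (a := E) ?_ hEtend
  filter_upwards [hev, eventually_ge_atTop 1] with n hα1 hn1
  set α : ℝ := a n with hαdef
  have hα : 0 < α := ha n
  have hα1' : 1 < α := by linarith
  set q : ℝ := α⁻¹ with hqdef
  have hq0 : 0 < q := by positivity
  have hq1 : q < 1 := by rw [hqdef, inv_lt_one_iff₀]; right; exact hα1'
  have hqq₀ : q ≤ q₀ := by
    rw [hqdef, hq₀def]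
    exact inv_anti₀ h1ε hα1
  have hnR : (1:ℝ) ≤ (n:ℝ) := by exact_mod_cast hn1
  have hh : (0:ℝ) < α * n := by positivity
  have hX : (0:ℝ) < (α * n) ^ n / (Nat.factorial n : ℝ) := by positivity
  set S : ℝ := ∑ j ∈ range (n+1), Stmt10Aux.c γ j * q ^ j * Stmt10Aux.P j n with hSdef
  have h1q : (0:ℝ) < 1 - q := by linarith
  have hfq := Stmt10Aux.key_identity γ hγ hq0.le hq1
  have hrp : (0:ℝ) < (1 - q) ^ γ := Real.rpow_pos_of_pos h1q γ
  have hfval : (1/(1-q))^γ = Stmt10Aux.f γ q := by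
    rw [one_div, Real.inv_rpow h1q.le]
    exact (eq_inv_of_mul_eq_one_left hfq).symm
  have hf1 : 1 ≤ Stmt10Aux.f γ q :=
    Stmt10Aux.f_pos_ge_one γ hγ hq₀0 hq₀1 hq0.le hqq₀
  have hfpos : 0 < Stmt10Aux.f γ q := lt_of_lt_of_le one_pos hf1
  -- numerator
  have hNum : (∑ k ∈ Finset.range (n + 1),
        Real.Gamma (((n - k : ℕ) : ℝ) + γ) / (Real.Gamma γ * (Nat.factorial (n - k) : ℝ)) *
          (a n * (n : ℝ)) ^ k / (Nat.factorial k : ℝ)) =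
      S * ((α * n) ^ n / (Nat.factorial n : ℝ)) := by
    have reflect := Finset.sum_range_reflect
      (fun j => Stmt10Aux.c γ j * (α * n) ^ (n - j) / (Nat.factorial (n - j) : ℝ)) (n+1)
    have step1 : (∑ k ∈ Finset.range (n + 1),
        Real.Gamma (((n - k : ℕ) : ℝ) + γ) / (Real.Gamma γ * (Nat.factorial (n - k) : ℝ)) *
          (a n * (n : ℝ)) ^ k / (Nat.factorial k : ℝ)) =
        ∑ k ∈ range (n+1),
          Stmt10Aux.c γ (n + 1 - 1 - k) * (α * n) ^ (n - (n + 1 - 1 - k)) /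
            (Nat.factorial (n - (n + 1 - 1 - k)) : ℝ) := by
      apply sum_congr rfl
      intro k hk
      have hk' : k ≤ n := Nat.lt_succ_iff.1 (mem_range.1 hk)
      have e1 : n + 1 - 1 - k = n - k := by omega
      have e2 : n - (n - k) = k := by omega
      rw [e1, e2, Stmt10Aux.c, hαdef]
    rw [step1, reflect, Finset.sum_mul]
    apply sum_congr rfl
    intro j hj
    have hjn : j ≤ n := Nat.lt_succ_iff.1 (mem_range.1 hj)
    exact Stmt10Aux.term_eq γ hjn hn1 hα
  -- denominator
  have hDen : (1 / (1 - (a n)⁻¹)) ^ γ * (a n * (n : ℝ)) ^ n / (Nat.factorial n : ℝ) =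
      Stmt10Aux.f γ q * ((α * n) ^ n / (Nat.factorial n : ℝ)) := by
    rw [← hαdef, ← hqdef, hfval]
    ring
  rw [hNum, hDen, mul_div_mul_right _ _ hX.ne']
  -- now bound |S / f - 1| ≤ E n
  have hcnn : ∀ j : ℕ, 0 ≤ Stmt10Aux.c γ j := fun j => (Stmt10Aux.c_pos γ hγ j).le
  have hA_q : Summable (fun j : ℕ => Stmt10Aux.c γ j * q ^ j) :=
    Stmt10Aux.summable_A γ hγ hq₀0 hq₀1 (by rw [abs_of_nonneg hq0.le]; exact hqq₀)
  have hS_le : S ≤ ∑ j ∈ range (n+1), Stmt10Aux.c γ j * q ^ j := by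
    apply sum_le_sum
    intro j hj
    have hjn : j ≤ n := Nat.lt_succ_iff.1 (mem_range.1 hj)
    have := Stmt10Aux.P_le_one hjn
    have h0 : 0 ≤ Stmt10Aux.c γ j * q ^ j := by
      have := hcnn j; positivity
    exact mul_le_of_le_one_right h0 this
  have hSf : S ≤ Stmt10Aux.f γ q := by
    refine le_trans hS_le ?_
    exact Summable.sum_le_tsum (range (n+1)) (fun j _ => by have := hcnn j; positivity) hA_q
  have hfS : Stmt10Aux.f γ q - S ≤ E n := by
    have hsplit : Stmt10Aux.f γ q = (∑ j ∈ range (n+1), Stmt10Aux.c γ j * q ^ j) +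
        ∑' i : ℕ, Stmt10Aux.c γ (i + (n+1)) * q ^ (i + (n+1)) :=
      (Summable.sum_add_tsum_nat_add (n+1) hA_q).symm
    rw [hsplit, hSdef, hEdef]
    have part1 : (∑ j ∈ range (n+1), Stmt10Aux.c γ j * q ^ j) -
        (∑ j ∈ range (n+1), Stmt10Aux.c γ j * q ^ j * Stmt10Aux.P j n) ≤ K / n := by
      rw [← Finset.sum_sub_distrib]
      have hstep : ∀ j ∈ range (n+1),
          Stmt10Aux.c γ j * q ^ j - Stmt10Aux.c γ j * q ^ j * Stmt10Aux.P j n ≤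
            Stmt10Aux.c γ j * (j:ℝ)^2 * q₀ ^ j / n := by
        intro j hj
        have hjn : j ≤ n := Nat.lt_succ_iff.1 (mem_range.1 hj)
        have hP1 := Stmt10Aux.P_le_one hjn
        have hPl := Stmt10Aux.P_lower hjn hn1
        have hqp : q ^ j ≤ q₀ ^ j := pow_le_pow_left₀ hq0.le hqq₀ j
        have hc := hcnn j
        have e1 : Stmt10Aux.c γ j * q ^ j - Stmt10Aux.c γ j * q ^ j * Stmt10Aux.P j n =
            (Stmt10Aux.c γ j * q ^ j) * (1 - Stmt10Aux.P j n) := by ring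
        rw [e1]
        calc (Stmt10Aux.c γ j * q ^ j) * (1 - Stmt10Aux.P j n)
            ≤ (Stmt10Aux.c γ j * q₀ ^ j) * ((j:ℝ)^2 / n) := by
              apply mul_le_mul
              · exact mul_le_mul_of_nonneg_left hqp hc
              · linarith
              · linarith
              · positivity
          _ = Stmt10Aux.c γ j * (j:ℝ)^2 * q₀ ^ j / n := by ring
      calc (∑ j ∈ range (n+1), (Stmt10Aux.c γ j * q ^ j -
              Stmt10Aux.c γ j * q ^ j * Stmt10Aux.P j n))
          ≤ ∑ j ∈ range (n+1), Stmt10Aux.c γ j * (j:ℝ)^2 * q₀ ^ j / n :=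
            sum_le_sum hstep
        _ = (∑ j ∈ range (n+1), Stmt10Aux.c γ j * (j:ℝ)^2 * q₀ ^ j) / n := by
            rw [Finset.sum_div]
        _ ≤ K / n := by
            gcongr
            exact Summable.sum_le_tsum (range (n+1))
              (fun j _ => by have := hcnn j; positivity) hKsum
    have part2 : (∑' i : ℕ, Stmt10Aux.c γ (i + (n+1)) * q ^ (i + (n+1))) ≤
        ∑' i : ℕ, Stmt10Aux.c γ (i + (n+1)) * q₀ ^ (i + (n+1)) := by
      apply Summable.tsum_le_tsum
      · intro i
        exact mul_le_mul_of_nonneg_left (pow_le_pow_left₀ hq0.le hqq₀ _) (hcnn _)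
      · exact (summable_nat_add_iff
            (f := fun j : ℕ => Stmt10Aux.c γ j * q ^ j) (n+1)).2 hA_q
      · exact (summable_nat_add_iff
            (f := fun j : ℕ => Stmt10Aux.c γ j * q₀ ^ j) (n+1)).2 hAq₀
    have expand : (∑ j ∈ range (n+1), Stmt10Aux.c γ j * q ^ j) +
        (∑' i : ℕ, Stmt10Aux.c γ (i + (n+1)) * q ^ (i + (n+1))) -
        (∑ j ∈ range (n+1), Stmt10Aux.c γ j * q ^ j * Stmt10Aux.P j n) =
        ((∑ j ∈ range (n+1), Stmt10Aux.c γ j * q ^ j) -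
          (∑ j ∈ range (n+1), Stmt10Aux.c γ j * q ^ j * Stmt10Aux.P j n)) +
        (∑' i : ℕ, Stmt10Aux.c γ (i + (n+1)) * q ^ (i + (n+1))) := by ring
    rw [expand]
    exact add_le_add part1 part2
  -- final
  have heq : S / Stmt10Aux.f γ q - 1 = (S - Stmt10Aux.f γ q) / Stmt10Aux.f γ q := by
    field_simp
  rw [heq, Real.norm_eq_abs, abs_div, abs_of_pos hfpos,
    abs_of_nonpos (by linarith : S - Stmt10Aux.f γ q ≤ 0)]
  calc -(S - Stmt10Aux.f γ q) / Stmt10Aux.f γ q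
      ≤ -(S - Stmt10Aux.f γ q) / 1 := by
        gcongr
        linarith
    _ = Stmt10Aux.f γ q - S := by ring
    _ ≤ E n := hfS
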